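/- Let 0 < r ≤ π/2 and let γ : [0, π·sin r] → ℝ^{n+1} be a C² unit-speed curve on the unit sphere (‖γ(t)‖ = 1, ‖γ'(t)‖ = 1 for all t) with ‖γ''(t) + γ(t)‖ ≤ cot r for all t. If equality ⟨γ(0), γ(π·sin r)⟩ = cos(2r) holds, then the image of γ is contained in a 2-dimensional affine subspace of ℝ^{n+1}; in particular γ is contained in a planar circle (the intersection of the unit sphere with a 2-dimensional affine subspace). -/

import Mathlib

open Real Set MeasureTheory intervalIntegral RealInnerProductSpace Topology Filter

set_option maxHeartbeats 1000000

lemma eqzero_of_integral_eq_zero {φ : ℝ → ℝ} {a b : ℝ}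
    (hab : a < b) (hc : ContinuousOn φ (Icc a b))
    (hnn : ∀ t ∈ Icc a b, 0 ≤ φ t)
    (hz : ∫ t in a..b, φ t = 0) :
    ∀ t ∈ Ioo a b, φ t = 0 := by
  intro t0 ht0
  by_contra hne
  have hpos : 0 < φ t0 := lt_of_le_of_ne (hnn t0 (Ioo_subset_Icc_self ht0)) (Ne.symm hne)
  have hca : ContinuousAt φ t0 :=
    hc.continuousAt (Icc_mem_nhds ht0.1 ht0.2)
  obtain ⟨δ, hδ, hball⟩ := Metric.mem_nhds_iff.1 (hca (Ioi_mem_nhds (half_lt_self hpos)))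
  set d : ℝ := min (δ / 2) (min (t0 - a) (b - t0)) with hd
  have hdpos : 0 < d :=
    lt_min (by linarith) (lt_min (by linarith [ht0.1]) (by linarith [ht0.2]))
  have hda : d ≤ t0 - a := le_trans (min_le_right _ _) (min_le_left _ _)
  have hdb : d ≤ b - t0 := le_trans (min_le_right _ _) (min_le_right _ _)
  have hsub1 : Icc (t0 - d) (t0 + d) ⊆ Icc a b :=
    Icc_subset_Icc (by linarith) (by linarith)
  have hφhalf : ∀ x ∈ Icc (t0 - d) (t0 + d), φ t0 / 2 ≤ φ x := by
    intro x hx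
    refine le_of_lt (hball ?_)
    rw [Metric.mem_ball, Real.dist_eq, abs_sub_lt_iff]
    have h1 := hx.1; have h2 := hx.2
    have hd2 : d ≤ δ / 2 := min_le_left _ _
    constructor <;> linarith
  have hint : ∀ u v, u ∈ Icc a b → v ∈ Icc a b → IntervalIntegrable φ volume u v := fun u v hu hv =>
    (hc.mono (uIcc_subset_Icc hu hv)).intervalIntegrable
  have m1 : t0 - d ∈ Icc a b := ⟨by linarith, by linarith⟩
  have m2 : t0 + d ∈ Icc a b := ⟨by linarith, by linarith⟩
  have ha' : a ∈ Icc a b := ⟨le_refl _, le_of_lt hab⟩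
  have hb' : b ∈ Icc a b := ⟨le_of_lt hab, le_refl _⟩
  have hsplit : (∫ t in a..(t0 - d), φ t) + (∫ t in (t0 - d)..(t0 + d), φ t)
      + (∫ t in (t0 + d)..b, φ t) = ∫ t in a..b, φ t := by
    rw [integral_add_adjacent_intervals (hint _ _ ha' m1) (hint _ _ m1 m2),
      integral_add_adjacent_intervals (hint _ _ ha' m2) (hint _ _ m2 hb')]
  have h1 : 0 ≤ ∫ t in a..(t0 - d), φ t :=
    integral_nonneg (by linarith) (fun u hu => hnn u ⟨hu.1, by linarith [hu.2]⟩)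
  have h3 : 0 ≤ ∫ t in (t0 + d)..b, φ t :=
    integral_nonneg (by linarith) (fun u hu => hnn u ⟨by linarith [hu.1], hu.2⟩)
  have h2 : (2 * d) * (φ t0 / 2) ≤ ∫ t in (t0 - d)..(t0 + d), φ t := by
    have := integral_mono_on (a := t0 - d) (b := t0 + d) (μ := volume)
      (f := fun _ => φ t0 / 2) (g := φ) (by linarith)
      intervalIntegrable_const (hint _ _ m1 m2) hφhalf
    rwa [intervalIntegral.integral_const, smul_eq_mul, show t0 + d - (t0 - d) = 2 * d by ring] at this
  have : 0 < (2 * d) * (φ t0 / 2) := by positivity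
  linarith [hz ▸ hsplit]

lemma eq_of_sq_eq_sq' {x y : ℝ} (hx : 0 ≤ x) (hy : 0 ≤ y) (h : x^2 = y^2) : x = y := by
  rcases mul_eq_zero.1 (show (x - y) * (x + y) = 0 by linear_combination h) with h' | h'
  · linarith
  · linarith

/-- **Bow Lemma, spherical case (rigidity).**
Let `0 < r ≤ π/2` and let `γ : [0, π sin r] → Sⁿ ⊂ ℝ^{n+1}` be a C² unit-speed curve on
the unit sphere with spherical geodesic curvature `‖γ'' + γ‖ ≤ cot r`.  If the endpoints
satisfy `⟨γ 0, γ (π sin r)⟩ = cos (2r)` (spherical distance exactly `2r`), then the image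
of `γ` is contained in a 2-dimensional affine subspace of `ℝ^{n+1}`; in particular `γ`
is contained in a planar circle. -/
theorem bow_lemma_spherical_rigidity {n : ℕ} (r : ℝ) (hr : 0 < r) (hr' : r ≤ π / 2)
    (γ : ℝ → EuclideanSpace ℝ (Fin (n + 1)))
    (hγ : ContDiffOn ℝ 2 γ (Icc 0 (π * Real.sin r)))
    (hsphere : ∀ t ∈ Icc 0 (π * Real.sin r), ‖γ t‖ = 1)
    (hspeed : ∀ t ∈ Icc 0 (π * Real.sin r),
      ‖derivWithin γ (Icc 0 (π * Real.sin r)) t‖ = 1)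
    (hcurv : ∀ t ∈ Icc 0 (π * Real.sin r),
      ‖derivWithin (derivWithin γ (Icc 0 (π * Real.sin r))) (Icc 0 (π * Real.sin r)) t
        + γ t‖ ≤ Real.cot r)
    (heq : (inner ℝ (γ 0) (γ (π * Real.sin r)) : ℝ) = Real.cos (2 * r)) :
    ∃ A : AffineSubspace ℝ (EuclideanSpace ℝ (Fin (n + 1))),
      Module.finrank ℝ A.direction = 2 ∧
      ∀ t ∈ Icc 0 (π * Real.sin r), γ t ∈ A := by
  have hrπ : r < π := lt_of_le_of_lt hr' (by linarith [Real.pi_pos])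
  have hs : 0 < Real.sin r := Real.sin_pos_of_pos_of_lt_pi hr hrπ
  have hc0 : 0 ≤ Real.cos r := Real.cos_nonneg_of_mem_Icc ⟨by linarith [Real.pi_pos], hr'⟩
  have hc1 : Real.sin r ^ 2 + Real.cos r ^ 2 = 1 := Real.sin_sq_add_cos_sq r
  have hcot : Real.cot r = Real.cos r * (Real.sin r)⁻¹ := by
    rw [Real.cot_eq_cos_div_sin]; ring
  have hcos2 : Real.cos (2 * r) = 2 * Real.cos r ^ 2 - 1 := Real.cos_two_mul r
  set s := Real.sin r with hs_def
  set c := Real.cos r with hc_def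
  set L := π * s with hL_def
  have hL : 0 < L := mul_pos Real.pi_pos hs
  set I := Icc (0 : ℝ) L with hI_def
  set m := s⁻¹ with hm_def
  have hm : 0 < m := inv_pos.2 hs
  have hms : m * s = 1 := inv_mul_cancel₀ hs.ne'
  have hmL : m * L = π := by
    rw [hL_def, show m * (π * s) = m * s * π from by ring, hms, one_mul]
  have hip : ⟪γ 0, γ L⟫ = 2 * c ^ 2 - 1 := by rw [← hcos2]; exact heq
  have h0I : (0 : ℝ) ∈ I := ⟨le_refl _, hL.le⟩
  have hLI : L ∈ I := ⟨hL.le, le_refl _⟩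
  have hUD : UniqueDiffOn ℝ I := uniqueDiffOn_Icc hL
  set g := derivWithin γ I with hg_def
  set g2 := derivWithin g I with hg2_def
  have hγd : DifferentiableOn ℝ γ I := hγ.differentiableOn (by norm_num)
  have hgc1 : ContDiffOn ℝ 1 g I := hγ.derivWithin hUD (by norm_num)
  have hgd : DifferentiableOn ℝ g I := hgc1.differentiableOn one_ne_zero
  have hg2c : ContinuousOn g2 I := hgc1.continuousOn_derivWithin hUD le_rfl
  have hγc : ContinuousOn γ I := hγ.continuousOn
  have hgc : ContinuousOn g I := hgc1.continuousOn
  have hγ' : ∀ t ∈ I, HasDerivWithinAt γ (g t) I t := fun t ht => (hγd t ht).hasDerivWithinAt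
  have hg' : ∀ t ∈ I, HasDerivWithinAt g (g2 t) I t := fun t ht => (hgd t ht).hasDerivWithinAt
  have hnγ : ∀ t ∈ I, ⟪γ t, γ t⟫ = 1 := by
    intro t ht
    rw [real_inner_self_eq_norm_sq, hsphere t ht]; norm_num
  have hng : ∀ t ∈ I, ⟪g t, g t⟫ = 1 := by
    intro t ht
    rw [real_inner_self_eq_norm_sq, hspeed t ht]; norm_num
  -- γ ⊥ γ'
  have horth : ∀ t ∈ I, ⟪γ t, g t⟫ = 0 := by
    intro t ht
    have h1 : HasDerivWithinAt (fun u => ⟪γ u, γ u⟫) (⟪γ t, g t⟫ + ⟪g t, γ t⟫) I t :=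
      (hγ' t ht).inner ℝ (hγ' t ht)
    have h2 : HasDerivWithinAt (fun u => ⟪γ u, γ u⟫) 0 I t :=
      (hasDerivWithinAt_const t I (1 : ℝ)).congr (fun u hu => hnγ u hu) (hnγ t ht)
    have e1 := h1.derivWithin (hUD t ht)
    have e2 := h2.derivWithin (hUD t ht)
    rw [e2] at e1
    have e3 := real_inner_comm (γ t) (g t)
    linarith
  -- ⟪γ, γ''⟫ = -1
  have hC : ∀ t ∈ I, ⟪γ t, g2 t⟫ = -1 := by
    intro t ht
    have h1 : HasDerivWithinAt (fun u => ⟪γ u, g u⟫) (⟪γ t, g2 t⟫ + ⟪g t, g t⟫) I t :=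
      (hγ' t ht).inner ℝ (hg' t ht)
    have h2 : HasDerivWithinAt (fun u => ⟪γ u, g u⟫) 0 I t :=
      (hasDerivWithinAt_const t I (0 : ℝ)).congr (fun u hu => horth u hu) (horth t ht)
    have e1 := h1.derivWithin (hUD t ht)
    have e2 := h2.derivWithin (hUD t ht)
    rw [e2] at e1
    rw [hng t ht] at e1
    linarith
  -- pointwise bound on ‖γ'' + m² γ‖
  have hbound : ∀ t ∈ I, ‖g2 t + (m ^ 2) • γ t‖ ≤ c * m ^ 2 := by
    intro t ht
    have hv : ⟪g2 t + γ t, γ t⟫ = 0 := by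
      rw [inner_add_left, ← real_inner_comm (g2 t) (γ t), hC t ht, hnγ t ht]; ring
    have key : g2 t + (m ^ 2) • γ t = (g2 t + γ t) + (m ^ 2 - 1) • γ t := by module
    have hnorm2 : ‖g2 t + (m ^ 2) • γ t‖ ^ 2 = ‖g2 t + γ t‖ ^ 2 + (m ^ 2 - 1) ^ 2 := by
      rw [key, norm_add_sq_real, real_inner_smul_right, hv, norm_smul,
        hsphere t ht]
      simp [mul_pow, sq_abs]
    have hcb := hcurv t ht
    rw [hcot] at hcb
    have hsm' : s ^ 2 * m ^ 2 = 1 := by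
      rw [← mul_pow, mul_comm s m, hms]; norm_num
    have hm2 : m ^ 2 - 1 = c ^ 2 * m ^ 2 := by
      linear_combination (-(m^2)) * hc1 + hsm'
    have hnn : 0 ≤ ‖g2 t + (m ^ 2) • γ t‖ := norm_nonneg _
    have hcmnn : 0 ≤ c * m ^ 2 := by positivity
    have h1 : ‖g2 t + (m ^ 2) • γ t‖ ^ 2 ≤ (c * m ^ 2) ^ 2 := by
      rw [hnorm2, hm2]
      have hb2 : ‖g2 t + γ t‖ ^ 2 ≤ (c * m) ^ 2 :=
        pow_le_pow_left₀ (norm_nonneg _) hcb 2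
      have key : (c*m)^2 + (c^2*m^2)^2 = (c*m^2)^2 := by
        linear_combination (-(c^2*m^2)) * hsm' + (c^2*m^2*m^2) * hc1
      linarith
    calc ‖g2 t + (m ^ 2) • γ t‖ = Real.sqrt (‖g2 t + (m ^ 2) • γ t‖ ^ 2) :=
          (Real.sqrt_sq hnn).symm
      _ ≤ Real.sqrt ((c * m ^ 2) ^ 2) := Real.sqrt_le_sqrt h1
      _ = c * m ^ 2 := Real.sqrt_sq hcmnn
  -- the center p
  set p := (2:ℝ)⁻¹ • (γ 0 + γ L) with hp_def
  have hsum_sq : ‖γ 0 + γ L‖ ^ 2 = 4 * c ^ 2 := by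
    rw [norm_add_sq_real, hsphere 0 h0I, hsphere L hLI, hip]; ring
  have hpnorm : ‖p‖ = c := by
    apply eq_of_sq_eq_sq' (norm_nonneg _) hc0
    rw [hp_def, norm_smul, Real.norm_eq_abs, mul_pow, sq_abs, hsum_sq]
    ring
  have hODEIco : ∀ t ∈ Ico 0 L, g2 t + (m^2) • γ t = (m^2) • p := by
    by_cases hczero : c = 0
    · have hp0 : p = 0 := norm_eq_zero.1 (by rw [hpnorm, hczero])
      intro t ht
      have hb := hbound t (Ico_subset_Icc_self ht)
      rw [hczero] at hb
      have h0 : g2 t + (m^2) • γ t = 0 := norm_le_zero_iff.1 (by linarith)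
      rw [h0, hp0, smul_zero]
    · have hcpos : 0 < c := lt_of_le_of_ne hc0 (Ne.symm hczero)
      set u := c⁻¹ • p with hu_def
      have hunorm : ‖u‖ = 1 := by
        rw [hu_def, norm_smul, Real.norm_eq_abs, abs_of_pos (inv_pos.2 hcpos), hpnorm]
        field_simp
      set f := fun t => g2 t + (m^2) • γ t with hf_def
      have hfc : ContinuousOn f I := hg2c.add (hγc.const_smul (m^2) : ContinuousOn (fun t => (m^2) • γ t) I)
      have hsinc : Continuous fun t => Real.sin (m*t) :=
        Real.continuous_sin.comp (continuous_const.mul continuous_id)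
      have hint_f : IntervalIntegrable (fun t => Real.sin (m*t) • f t) volume 0 L := by
        apply ContinuousOn.intervalIntegrable
        rw [uIcc_of_le hL.le]
        exact (hsinc.continuousOn).smul hfc
      have hIBP : (∫ t in (0:ℝ)..L, Real.sin (m*t) • f t) = (2*m) • p := by
        set F := fun t => Real.sin (m*t) • g t - (m * Real.cos (m*t)) • γ t with hF_def
        have hFc : ContinuousOn F I :=
          ((hsinc.continuousOn).smul hgc).sub
            (((continuous_const.mul
              (Real.continuous_cos.comp (continuous_const.mul continuous_id))).continuousOn).smul hγc)
        have hFd : ∀ t ∈ Ioo 0 L, HasDerivWithinAt F (Real.sin (m*t) • f t) (Ioi t) t := by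
          intro t ht
          have hmem : I ∈ 𝓝 t := Icc_mem_nhds ht.1 ht.2
          have hγt : HasDerivAt γ (g t) t := (hγ' t (Ioo_subset_Icc_self ht)).hasDerivAt hmem
          have hgt : HasDerivAt g (g2 t) t := (hg' t (Ioo_subset_Icc_self ht)).hasDerivAt hmem
          have hsin : HasDerivAt (fun t => Real.sin (m*t)) (m * Real.cos (m*t)) t := by
            have h0 := ((hasDerivAt_id t).const_mul m).sin
            simpa [mul_comm] using h0
          have hcosm : HasDerivAt (fun t => m * Real.cos (m*t)) (-(m^2) * Real.sin (m*t)) t := by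
            have h1 : HasDerivAt (fun t => Real.cos (m*t)) (-Real.sin (m*t) * m) t := by
              have h0 := ((hasDerivAt_id t).const_mul m).cos
              simpa [mul_comm] using h0
            have h2 := h1.const_mul m
            refine h2.congr_deriv ?_
            ring
          have hD := (hsin.smul hgt).sub (hcosm.smul hγt)
          have hD' : HasDerivAt F (Real.sin (m*t) • f t) t := by
            refine hD.congr_deriv ?_
            simp only [hf_def]
            module
          exact hD'.hasDerivWithinAt
        have hFTC := intervalIntegral.integral_eq_sub_of_hasDeriv_right_of_le hL.le hFc hFd hint_f
        rw [hFTC]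
        show Real.sin (m*L) • g L - (m * Real.cos (m*L)) • γ L
          - (Real.sin (m*0) • g 0 - (m * Real.cos (m*0)) • γ 0) = (2*m) • p
        rw [hmL, Real.sin_pi, Real.cos_pi, hp_def]
        norm_num
        module
      have hWin : (∫ t in (0:ℝ)..L, ⟪u, Real.sin (m*t) • f t⟫) = 2*m*c := by
        have hcomm := (innerSL ℝ u).intervalIntegral_comp_comm hint_f
        simp only [innerSL_apply_apply] at hcomm
        rw [hcomm, hIBP, real_inner_smul_right, hu_def, real_inner_smul_left,
          real_inner_self_eq_norm_sq, hpnorm]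
        field_simp
      have hsin_int : (∫ t in (0:ℝ)..L, Real.sin (m*t)) = 2 * s := by
        have hanti : ∀ t ∈ uIcc (0:ℝ) L, HasDerivAt (fun t => -(m⁻¹ * Real.cos (m*t))) (Real.sin (m*t)) t := by
          intro t _
          have h1 : HasDerivAt (fun t => Real.cos (m*t)) (-Real.sin (m*t) * m) t := by
            have h0 := ((hasDerivAt_id t).const_mul m).cos
            simpa [mul_comm] using h0
          have h2 := (h1.const_mul m⁻¹).neg
          refine h2.congr_deriv ?_
          field_simp
        rw [intervalIntegral.integral_eq_sub_of_hasDerivAt hanti (hsinc.intervalIntegrable _ _)]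
        rw [hmL]
        norm_num [Real.cos_pi]
        rw [hm_def, inv_inv]
        ring
      set k := c * m^2 with hk_def
      have hkpos : 0 < k := by positivity
      have hφcont : ContinuousOn (fun t => k * Real.sin (m*t) - ⟪u, Real.sin (m*t) • f t⟫) I :=
        ((continuous_const.mul hsinc).continuousOn).sub
          (continuousOn_const.inner ((hsinc.continuousOn).smul hfc))
      have hφnn : ∀ t ∈ I, 0 ≤ k * Real.sin (m*t) - ⟪u, Real.sin (m*t) • f t⟫ := by
        intro t ht
        have hsin_nn : 0 ≤ Real.sin (m*t) := by
          apply Real.sin_nonneg_of_nonneg_of_le_pi (mul_nonneg hm.le ht.1)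
          rw [← hmL]
          exact mul_le_mul_of_nonneg_left ht.2 hm.le
        rw [real_inner_smul_right]
        have hle : ⟪u, f t⟫ ≤ k := by
          calc ⟪u, f t⟫ ≤ ‖u‖ * ‖f t‖ := real_inner_le_norm _ _
            _ = ‖f t‖ := by rw [hunorm, one_mul]
            _ ≤ k := hbound t ht
        nlinarith [mul_nonneg hsin_nn (sub_nonneg.2 hle)]
      have hφint : (∫ t in (0:ℝ)..L, (k * Real.sin (m*t) - ⟪u, Real.sin (m*t) • f t⟫)) = 0 := by
        have hint1 : IntervalIntegrable (fun t => k * Real.sin (m*t)) volume 0 L :=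
          (continuous_const.mul hsinc).intervalIntegrable _ _
        have hint2 : IntervalIntegrable (fun t => ⟪u, Real.sin (m*t) • f t⟫) volume 0 L := by
          apply ContinuousOn.intervalIntegrable
          rw [uIcc_of_le hL.le]
          exact continuousOn_const.inner ((hsinc.continuousOn).smul hfc)
        rw [intervalIntegral.integral_sub hint1 hint2,
          intervalIntegral.integral_const_mul, hsin_int, hWin, hk_def]
        linear_combination (2*c*m) * hms
      have hzero := eqzero_of_integral_eq_zero hL hφcont hφnn hφint
      have hIoo : ∀ t ∈ Ioo 0 L, f t = (m^2) • p := by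
        intro t ht
        have hz := hzero t ht
        rw [real_inner_smul_right] at hz
        have hsin_pos : 0 < Real.sin (m*t) := by
          apply Real.sin_pos_of_pos_of_lt_pi (mul_pos hm ht.1)
          rw [← hmL]
          exact (mul_lt_mul_iff_right₀ hm).2 ht.2
        have hmz : Real.sin (m*t) * (k - ⟪u, f t⟫) = 0 := by linear_combination hz
        have hufk : ⟪u, f t⟫ = k := by
          rcases mul_eq_zero.1 hmz with h | h
          · exact absurd h hsin_pos.ne'
          · linarith
        have hfle : ‖f t‖ ≤ k := hbound t (Ioo_subset_Icc_self ht)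
        have e1 : ⟪f t, k • u⟫ = k * k := by
          rw [real_inner_smul_right, real_inner_comm, hufk]
        have e2 : ‖k • u‖ = k := by
          rw [norm_smul, Real.norm_eq_abs, abs_of_pos hkpos, hunorm, mul_one]
        have hsub : ‖f t - k • u‖ ^ 2 ≤ 0 := by
          rw [norm_sub_sq_real, e1, e2]
          nlinarith [norm_nonneg (f t)]
        have hz2 : f t - k • u = 0 := by
          have h0 : ‖f t - k • u‖ = 0 := by
            nlinarith [norm_nonneg (f t - k • u)]
          exact norm_eq_zero.1 h0
        have hfk : f t = k • u := by
          have := sub_eq_zero.1 hz2; exact this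
        rw [hfk, hu_def, smul_smul]
        congr 1
        rw [hk_def]
        field_simp
      have hf0 : f 0 = (m^2) • p := by
        have hnb : (𝓝[Ioo (0:ℝ) L] 0).NeBot := by
          rw [← mem_closure_iff_nhdsWithin_neBot, closure_Ioo hL.ne]
          exact h0I
        have h1 : Filter.Tendsto f (𝓝[Ioo (0:ℝ) L] 0) (𝓝 (f 0)) :=
          (hfc 0 h0I).mono Ioo_subset_Icc_self
        have h2 : Filter.Tendsto f (𝓝[Ioo (0:ℝ) L] 0) (𝓝 ((m^2) • p)) := by
          apply Filter.Tendsto.congr' _ tendsto_const_nhds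
          filter_upwards [self_mem_nhdsWithin] with x hx
          exact (hIoo x hx).symm
        exact tendsto_nhds_unique h1 h2
      intro t ht
      rcases eq_or_lt_of_le ht.1 with h0 | h0
      · rw [← h0]
        exact hf0
      · exact hIoo t ⟨h0, ht.2⟩
  -- solve the linear ODE
  set va := γ 0 - p with hva_def
  set vb := m⁻¹ • g 0 with hvb_def
  set dl := fun t => γ t - p - Real.cos (m*t) • va - Real.sin (m*t) • vb with hdl_def
  set dl1 := fun t => g t + (m * Real.sin (m*t)) • va - (m * Real.cos (m*t)) • vb with hdl1_def
  have hcos_d : ∀ t : ℝ, HasDerivAt (fun t => Real.cos (m*t)) (-Real.sin (m*t) * m) t := by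
    intro t
    have h0 := ((hasDerivAt_id t).const_mul m).cos
    simpa [mul_comm] using h0
  have hsin_d : ∀ t : ℝ, HasDerivAt (fun t => Real.sin (m*t)) (Real.cos (m*t) * m) t := by
    intro t
    have h0 := ((hasDerivAt_id t).const_mul m).sin
    simpa [mul_comm] using h0
  have hdl_d : ∀ t ∈ I, HasDerivWithinAt dl (dl1 t) I t := by
    intro t ht
    have h1 := (((hγ' t ht).sub_const p).sub
      (((hcos_d t).smul_const va).hasDerivWithinAt)).sub
      (((hsin_d t).smul_const vb).hasDerivWithinAt)
    refine h1.congr_deriv ?_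
    simp only [hdl1_def]
    module
  have hdl1_d : ∀ t ∈ Ico 0 L, HasDerivWithinAt dl1 (-(m^2) • dl t) I t := by
    intro t ht
    have hg2t : g2 t = (m^2) • p - (m^2) • γ t := eq_sub_of_add_eq (hODEIco t ht)
    have h1 := ((hg' t (Ico_subset_Icc_self ht)).add
      ((((hsin_d t).const_mul m).smul_const va).hasDerivWithinAt)).sub
      ((((hcos_d t).const_mul m).smul_const vb).hasDerivWithinAt)
    refine h1.congr_deriv ?_
    simp only [hdl_def]
    rw [hg2t]
    module
  set E := fun t => ⟪dl1 t, dl1 t⟫ + m^2 * ⟪dl t, dl t⟫ with hE_def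
  have hcosc : Continuous fun t : ℝ => Real.cos (m*t) :=
    Real.continuous_cos.comp (continuous_const.mul continuous_id)
  have hsinc' : Continuous fun t : ℝ => Real.sin (m*t) :=
    Real.continuous_sin.comp (continuous_const.mul continuous_id)
  have hdlc : ContinuousOn dl I := by
    refine ContinuousOn.sub (ContinuousOn.sub (hγc.sub continuousOn_const) ?_) ?_
    · exact hcosc.continuousOn.smul continuousOn_const
    · exact hsinc'.continuousOn.smul continuousOn_const
  have hdl1c : ContinuousOn dl1 I := by
    refine ContinuousOn.sub (ContinuousOn.add hgc ?_) ?_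
    · exact (continuous_const.mul hsinc').continuousOn.smul continuousOn_const
    · exact (continuous_const.mul hcosc).continuousOn.smul continuousOn_const
  have hEc : ContinuousOn E I := (hdl1c.inner hdl1c).add (continuousOn_const.mul (hdlc.inner hdlc))
  have hEd : ∀ t ∈ Ico 0 L, HasDerivWithinAt E 0 (Ici t) t := by
    intro t ht
    have htI : t ∈ I := Ico_subset_Icc_self ht
    have h1 := (((hdl1_d t ht).inner ℝ (hdl1_d t ht))).add
      ((((hdl_d t htI).inner ℝ (hdl_d t htI))).const_mul (m^2))
    have h1' : HasDerivWithinAt E 0 I t := by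
      refine h1.congr_deriv ?_
      rw [real_inner_smul_right, real_inner_smul_left, real_inner_comm (dl t) (dl1 t)]
      ring
    refine h1'.mono_of_mem_nhdsWithin ?_
    rw [mem_nhdsWithin]
    exact ⟨Iio L, isOpen_Iio, ht.2, fun x hx => ⟨le_trans ht.1 hx.2, le_of_lt hx.1⟩⟩
  have hdl0 : dl 0 = 0 := by
    simp only [hdl_def]
    rw [mul_zero, Real.cos_zero, Real.sin_zero, one_smul, zero_smul, hva_def]
    abel
  have hdl10 : dl1 0 = 0 := by
    simp only [hdl1_def]
    rw [mul_zero, Real.sin_zero, Real.cos_zero, mul_zero, mul_one, zero_smul, hvb_def,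
      smul_smul, mul_inv_cancel₀ hm.ne', one_smul]
    abel
  have hE0 : E 0 = 0 := by
    simp only [hE_def]
    rw [hdl0, hdl10]
    simp
  have hEconst := constant_of_has_deriv_right_zero hEc hEd
  have hdlzero : ∀ t ∈ I, dl t = 0 := by
    intro t ht
    have hEt : E t = 0 := by rw [hEconst t ht, hE0]
    have h1 : (0:ℝ) ≤ ⟪dl1 t, dl1 t⟫ := real_inner_self_nonneg
    have h2 : (0:ℝ) ≤ ⟪dl t, dl t⟫ := real_inner_self_nonneg
    have hEt' : ⟪dl1 t, dl1 t⟫ + m^2 * ⟪dl t, dl t⟫ = 0 := hEt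
    have h4 : m^2 * ⟪dl t, dl t⟫ ≤ 0 := by linarith
    have h5 : ⟪dl t, dl t⟫ ≤ 0 := by nlinarith [mul_pos hm hm]
    exact inner_self_eq_zero.1 (le_antisymm h5 h2)
  have hform : ∀ t ∈ I, γ t = p + Real.cos (m*t) • va + Real.sin (m*t) • vb := by
    intro t ht
    have h := hdlzero t ht
    simp only [hdl_def] at h
    refine sub_eq_zero.1 ?_
    calc γ t - (p + Real.cos (m*t) • va + Real.sin (m*t) • vb)
        = γ t - p - Real.cos (m*t) • va - Real.sin (m*t) • vb := by module
      _ = 0 := h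
  -- geometry of va, vb
  have hva_alt : va = (2:ℝ)⁻¹ • (γ 0 - γ L) := by
    rw [hva_def, hp_def]; module
  have hdiff_sq : ‖γ 0 - γ L‖ ^ 2 = 4 * s ^ 2 := by
    rw [norm_sub_sq_real, hsphere 0 h0I, hsphere L hLI, hip]
    linear_combination (-4) * hc1
  have hna : ‖va‖^2 = s^2 := by
    rw [hva_alt, norm_smul, Real.norm_eq_abs, mul_pow, sq_abs, hdiff_sq]
    ring
  have hnb : ‖vb‖ = s := by
    rw [hvb_def, norm_smul, Real.norm_eq_abs, abs_of_pos (inv_pos.2 hm), hspeed 0 h0I,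
      hm_def, inv_inv, mul_one]
  have htstar : L/2 ∈ I := ⟨by linarith, by linarith⟩
  have hmtstar : m * (L/2) = π/2 := by
    rw [show m * (L/2) = m*L/2 from by ring, hmL]
  have hγstar : γ (L/2) = p + vb := by
    rw [hform (L/2) htstar, hmtstar, Real.cos_pi_div_two, Real.sin_pi_div_two,
      zero_smul, one_smul, add_zero]
  have hpb : ⟪p, vb⟫ = 0 := by
    have h1 : ‖γ (L/2)‖ = 1 := hsphere _ htstar
    rw [hγstar] at h1
    have h2 : ‖p + vb‖^2 = 1 := by rw [h1]; norm_num
    rw [norm_add_sq_real, hpnorm, hnb] at h2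
    linarith [hc1]
  have hγ0 : γ 0 = p + va := by
    have h := hform 0 h0I
    rw [mul_zero, Real.cos_zero, Real.sin_zero, one_smul, zero_smul, add_zero] at h
    exact h
  have hg0 : g 0 = m • vb := by
    rw [hvb_def, smul_smul, mul_inv_cancel₀ hm.ne', one_smul]
  have hab : ⟪va, vb⟫ = 0 := by
    have h1 := horth 0 h0I
    rw [hγ0, hg0, inner_add_left, real_inner_smul_right p vb m,
      real_inner_smul_right va vb m, hpb] at h1
    have h2 : m * ⟪va, vb⟫ = 0 := by linarith
    rcases mul_eq_zero.1 h2 with h | h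
    · exact absurd h hm.ne'
    · exact h
  have hs2 : s^2 ≠ 0 := pow_ne_zero _ hs.ne'
  have hlin : LinearIndependent ℝ ![va, vb] := by
    rw [LinearIndependent.pair_iff]
    intro x y hxy
    have h1 : ⟪va, x • va + y • vb⟫ = 0 := by rw [hxy, inner_zero_right]
    have h2 : ⟪vb, x • va + y • vb⟫ = 0 := by rw [hxy, inner_zero_right]
    rw [inner_add_right, real_inner_smul_right va va x, real_inner_smul_right va vb y,
      real_inner_self_eq_norm_sq, hna, hab] at h1
    rw [inner_add_right, real_inner_smul_right vb va x, real_inner_smul_right vb vb y,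
      real_inner_self_eq_norm_sq, real_inner_comm va vb, hab, hnb] at h2
    constructor
    · have hx : x * s^2 = 0 := by linarith
      rcases mul_eq_zero.1 hx with h | h
      · exact h
      · exact absurd h hs2
    · have hy : y * s^2 = 0 := by linarith
      rcases mul_eq_zero.1 hy with h | h
      · exact h
      · exact absurd h hs2
  refine ⟨AffineSubspace.mk' p (Submodule.span ℝ (Set.range ![va, vb])), ?_, ?_⟩
  · rw [AffineSubspace.direction_mk']
    rw [finrank_span_eq_card hlin]
    simp
  · intro t ht
    rw [AffineSubspace.mem_mk']
    have hsub : γ t -ᵥ p = Real.cos (m*t) • va + Real.sin (m*t) • vb := by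
      rw [vsub_eq_sub, hform t ht]
      module
    rw [hsub]
    exact Submodule.add_mem _
      (Submodule.smul_mem _ _ (Submodule.subset_span ⟨0, rfl⟩))
      (Submodule.smul_mem _ _ (Submodule.subset_span ⟨1, rfl⟩))
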